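/- Inversion with respect to a circle preserves orthogonality: if ι is the inversion map with center O and radius k, and α, β are circles not passing through O that intersect orthogonally, then their images ι(α), ι(β) are circles that intersect orthogonally. -/

import Mathlib

open EuclideanSpace Metric

variable {E : Type*} [NormedAddCommGroup E] [InnerProductSpace ℝ E]

lemma aux_norm_sq (u v : E) (k r : ℝ)
    (hu : ‖u‖ ≠ 0) (hs : ‖v‖ ^ 2 - r ^ 2 ≠ 0) (h : ‖u - v‖ = r) :
    ‖(k ^ 2 / (‖v‖ ^ 2 - r ^ 2)) • v - (k ^ 2 / ‖u‖ ^ 2) • u‖ ^ 2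
      = (k ^ 2 * r) ^ 2 / (‖v‖ ^ 2 - r ^ 2) ^ 2 := by
  have h2 : ‖u‖ ^ 2 - 2 * inner ℝ u v + ‖v‖ ^ 2 = r ^ 2 := by
    have : ‖u - v‖ ^ 2 = r ^ 2 := by rw [h]
    rw [norm_sub_sq_real] at this; linarith
  have hu2 : ‖u‖ ^ 2 ≠ 0 := pow_ne_zero _ hu
  rw [norm_sub_sq_real]
  simp only [inner_smul_left, inner_smul_right, norm_smul, real_inner_self_eq_norm_sq,
    RCLike.conj_to_real, Real.norm_eq_abs, sq_abs, div_pow]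
  have hiv : (inner ℝ v u : ℝ) = (‖u‖ ^ 2 + (‖v‖ ^ 2 - r ^ 2)) / 2 := by
    rw [real_inner_comm]; linarith
  rw [hiv, mul_pow, mul_pow, sq_abs, sq_abs, div_pow, div_pow]
  field_simp
  ring

lemma aux_orth (v₁ v₂ : E) (k r₁ r₂ : ℝ)
    (hs₁ : ‖v₁‖ ^ 2 - r₁ ^ 2 ≠ 0) (hs₂ : ‖v₂‖ ^ 2 - r₂ ^ 2 ≠ 0)
    (h : r₁ ^ 2 + r₂ ^ 2 = ‖v₁ - v₂‖ ^ 2) :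
    (k ^ 2 * r₁) ^ 2 / (‖v₁‖ ^ 2 - r₁ ^ 2) ^ 2 + (k ^ 2 * r₂) ^ 2 / (‖v₂‖ ^ 2 - r₂ ^ 2) ^ 2
      = ‖(k ^ 2 / (‖v₁‖ ^ 2 - r₁ ^ 2)) • v₁ - (k ^ 2 / (‖v₂‖ ^ 2 - r₂ ^ 2)) • v₂‖ ^ 2 := by
  have h2 : ‖v₁‖ ^ 2 - 2 * inner ℝ v₁ v₂ + ‖v₂‖ ^ 2 = r₁ ^ 2 + r₂ ^ 2 := by
    rw [h, norm_sub_sq_real]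
  rw [norm_sub_sq_real]
  simp only [inner_smul_left, inner_smul_right, norm_smul, real_inner_self_eq_norm_sq,
    RCLike.conj_to_real, Real.norm_eq_abs, mul_pow, sq_abs, div_pow]
  have hiv : (inner ℝ v₁ v₂ : ℝ) = ((‖v₁‖ ^ 2 - r₁ ^ 2) + (‖v₂‖ ^ 2 - r₂ ^ 2)) / 2 := by linarith
  rw [hiv]
  field_simp
  ring

lemma mem_sphere_image (O c : E) (k r : ℝ) (hr : 0 < r) (hd : dist O c ≠ r)
    {P : E} (hP : P ∈ Metric.sphere c r) :
    O + (k ^ 2 / ‖P - O‖ ^ 2) • (P - O) ∈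
      Metric.sphere (O + (k ^ 2 / (dist O c ^ 2 - r ^ 2)) • (c - O))
        (k ^ 2 * r / |dist O c ^ 2 - r ^ 2|) := by
  have hv : dist O c = ‖c - O‖ := by rw [dist_eq_norm, ← norm_neg]; congr 1; abel
  have huv : ‖(P - O) - (c - O)‖ = r := by
    have : P - O - (c - O) = P - c := by abel
    rw [this, ← dist_eq_norm]; exact hP
  have hu : ‖P - O‖ ≠ 0 := by
    intro h0
    have : P = O := by rwa [norm_eq_zero, sub_eq_zero] at h0
    apply hd
    rw [← hP, this, dist_comm]
  have hs : ‖c - O‖ ^ 2 - r ^ 2 ≠ 0 := by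
    intro h0
    apply hd
    rw [hv]
    nlinarith [norm_nonneg (c - O)]
  rw [Metric.mem_sphere, dist_eq_norm, hv]
  have key := aux_norm_sq (P - O) (c - O) k r hu hs huv
  have hstep : O + (k ^ 2 / ‖P - O‖ ^ 2) • (P - O) -
      (O + (k ^ 2 / (‖c - O‖ ^ 2 - r ^ 2)) • (c - O))
      = -((k ^ 2 / (‖c - O‖ ^ 2 - r ^ 2)) • (c - O) - (k ^ 2 / ‖P - O‖ ^ 2) • (P - O)) := by
    abel
  rw [hstep, norm_neg]
  have h1 : (0:ℝ) ≤ ‖(k ^ 2 / (‖c - O‖ ^ 2 - r ^ 2)) • (c - O) - (k ^ 2 / ‖P - O‖ ^ 2) • (P - O)‖ :=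
    norm_nonneg _
  have h2 : (0:ℝ) ≤ k ^ 2 * r / |‖c - O‖ ^ 2 - r ^ 2| :=
    div_nonneg (by positivity) (abs_nonneg _)
  refine (sq_eq_sq₀ h1 h2).mp ?_
  rw [key]
  rw [div_pow, sq_abs, mul_pow]

lemma inv_invol (O Q : E) (k : ℝ) (hk : k ≠ 0) (hQ : Q ≠ O) :
    O + (k ^ 2 / ‖(O + (k ^ 2 / ‖Q - O‖ ^ 2) • (Q - O)) - O‖ ^ 2) •
      ((O + (k ^ 2 / ‖Q - O‖ ^ 2) • (Q - O)) - O) = Q := by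
  have hn : ‖Q - O‖ ≠ 0 := by simpa [sub_eq_zero] using hQ
  have hn2 : ‖Q - O‖ ^ 2 ≠ 0 := pow_ne_zero _ hn
  rw [add_sub_cancel_left, norm_smul, smul_smul, Real.norm_eq_abs]
  have habs : |k ^ 2 / ‖Q - O‖ ^ 2| = k ^ 2 / ‖Q - O‖ ^ 2 :=
    abs_of_pos (by positivity)
  rw [habs]
  have hscal : k ^ 2 / (k ^ 2 / ‖Q - O‖ ^ 2 * ‖Q - O‖) ^ 2 * (k ^ 2 / ‖Q - O‖ ^ 2) = 1 := by
    field_simp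
  rw [hscal, one_smul]
  abel

lemma image_inv_sphere (O c : E) (k r : ℝ) (hk : k ≠ 0) (hr : 0 < r) (hd : dist O c ≠ r) :
    (fun P => O + (k ^ 2 / ‖P - O‖ ^ 2) • (P - O)) '' Metric.sphere c r
      = Metric.sphere (O + (k ^ 2 / (dist O c ^ 2 - r ^ 2)) • (c - O))
          (k ^ 2 * r / |dist O c ^ 2 - r ^ 2|) := by
  set s := dist O c ^ 2 - r ^ 2 with hs_def
  have hs : s ≠ 0 := by
    intro h0
    apply hd
    nlinarith [dist_nonneg (x := O) (y := c)]
  set c' := O + (k ^ 2 / s) • (c - O) with hc'_def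
  set r' := k ^ 2 * r / |s| with hr'_def
  have hr' : 0 < r' := by
    rw [hr'_def]
    exact div_pos (by positivity) (abs_pos.mpr hs)
  have hOc' : dist O c' = (k ^ 2 / |s|) * dist O c := by
    rw [hc'_def, dist_eq_norm]
    have : O - (O + (k ^ 2 / s) • (c - O)) = -((k ^ 2 / s) • (c - O)) := by abel
    rw [this, norm_neg, norm_smul, Real.norm_eq_abs, abs_div, abs_of_nonneg (sq_nonneg k),
      dist_eq_norm, ← norm_neg (O - c)]
    congr 2
    abel
  have hd' : dist O c' ≠ r' := by
    rw [hOc', hr'_def, mul_div_right_comm]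
    intro h0
    have hkspos : (0:ℝ) < k ^ 2 / |s| := by positivity
    exact hd (mul_left_cancel₀ (ne_of_gt hkspos) h0)
  ext Q
  constructor
  · rintro ⟨P, hP, rfl⟩
    exact mem_sphere_image O c k r hr hd hP
  · intro hQ
    have hQne : Q ≠ O := by
      intro h0
      apply hd'
      rw [← hQ, h0, dist_comm]
    have him := mem_sphere_image O c' k r' hr' hd' hQ
    -- compute that the double-image sphere is the original one
    have hs' : dist O c' ^ 2 - r' ^ 2 = k ^ 4 / s := by
      have habs : |s| ≠ 0 := abs_ne_zero.mpr hs
      have hd2 : dist O c ^ 2 = s + r ^ 2 := by rw [hs_def]; ring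
      rw [hOc', hr'_def, mul_pow, div_pow, div_pow, mul_pow, sq_abs, hd2]
      field_simp
      ring
    have hc'' : O + (k ^ 2 / (dist O c' ^ 2 - r' ^ 2)) • (c' - O) = c := by
      rw [hs', hc'_def, add_sub_cancel_left, smul_smul]
      have : k ^ 2 / (k ^ 4 / s) * (k ^ 2 / s) = 1 := by
        field_simp
      rw [this, one_smul]
      abel
    have hr'' : k ^ 2 * r' / |dist O c' ^ 2 - r' ^ 2| = r := by
      rw [hs', hr'_def, abs_div, abs_of_nonneg (by positivity : (0:ℝ) ≤ k ^ 4)]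
      have habs : |s| ≠ 0 := abs_ne_zero.mpr hs
      field_simp
    rw [hc'', hr''] at him
    exact ⟨_, him, inv_invol O Q k hk hQne⟩

/-- Inversion preserves orthogonality: if two circles not passing through the
center `O` of inversion are orthogonal, then their images under the inversion
are again circles and are orthogonal. -/
theorem inversion_preserves_orthogonality
    (O : EuclideanSpace ℝ (Fin 2)) (k : ℝ) (hk : 0 < k)
    (c₁ c₂ : EuclideanSpace ℝ (Fin 2)) (r₁ r₂ : ℝ)
    (hr₁ : 0 < r₁) (hr₂ : 0 < r₂)
    (hO₁ : dist O c₁ ≠ r₁) (hO₂ : dist O c₂ ≠ r₂)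
    (horth : r₁ ^ 2 + r₂ ^ 2 = dist c₁ c₂ ^ 2) :
    ∃ (c₁' c₂' : EuclideanSpace ℝ (Fin 2)) (r₁' r₂' : ℝ),
      0 < r₁' ∧ 0 < r₂' ∧
      (fun P => O + (k ^ 2 / ‖P - O‖ ^ 2) • (P - O)) '' Metric.sphere c₁ r₁
        = Metric.sphere c₁' r₁' ∧
      (fun P => O + (k ^ 2 / ‖P - O‖ ^ 2) • (P - O)) '' Metric.sphere c₂ r₂
        = Metric.sphere c₂' r₂' ∧
      r₁' ^ 2 + r₂' ^ 2 = dist c₁' c₂' ^ 2 := by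
  have hk' : k ≠ 0 := ne_of_gt hk
  have hs₁ : dist O c₁ ^ 2 - r₁ ^ 2 ≠ 0 := by
    intro h0; apply hO₁; nlinarith [dist_nonneg (x := O) (y := c₁)]
  have hs₂ : dist O c₂ ^ 2 - r₂ ^ 2 ≠ 0 := by
    intro h0; apply hO₂; nlinarith [dist_nonneg (x := O) (y := c₂)]
  refine ⟨O + (k ^ 2 / (dist O c₁ ^ 2 - r₁ ^ 2)) • (c₁ - O),
    O + (k ^ 2 / (dist O c₂ ^ 2 - r₂ ^ 2)) • (c₂ - O),
    k ^ 2 * r₁ / |dist O c₁ ^ 2 - r₁ ^ 2|, k ^ 2 * r₂ / |dist O c₂ ^ 2 - r₂ ^ 2|,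
    div_pos (by positivity) (abs_pos.mpr hs₁),
    div_pos (by positivity) (abs_pos.mpr hs₂),
    image_inv_sphere O c₁ k r₁ hk' hr₁ hO₁,
    image_inv_sphere O c₂ k r₂ hk' hr₂ hO₂, ?_⟩
  have hv₁ : dist O c₁ = ‖c₁ - O‖ := by rw [dist_comm, dist_eq_norm]
  have hv₂ : dist O c₂ = ‖c₂ - O‖ := by rw [dist_comm, dist_eq_norm]
  have hvv : r₁ ^ 2 + r₂ ^ 2 = ‖(c₁ - O) - (c₂ - O)‖ ^ 2 := by
    rw [show (c₁ - O) - (c₂ - O) = c₁ - c₂ by abel, ← dist_eq_norm]; exact horth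
  simp only [hv₁, hv₂] at hs₁ hs₂ ⊢
  rw [div_pow, div_pow, sq_abs, sq_abs, mul_pow, mul_pow, dist_eq_norm,
    show (O + (k ^ 2 / (‖c₁ - O‖ ^ 2 - r₁ ^ 2)) • (c₁ - O)) -
        (O + (k ^ 2 / (‖c₂ - O‖ ^ 2 - r₂ ^ 2)) • (c₂ - O))
      = (k ^ 2 / (‖c₁ - O‖ ^ 2 - r₁ ^ 2)) • (c₁ - O)
        - (k ^ 2 / (‖c₂ - O‖ ^ 2 - r₂ ^ 2)) • (c₂ - O) from by abel]
  have := aux_orth (c₁ - O) (c₂ - O) k r₁ r₂ hs₁ hs₂ hvv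
  rw [mul_pow, mul_pow] at this
  exact this
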